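/- The function g(x) = x·e^{-x²}/erf(x) is monotonically decreasing on (0, ∞). -/

import Mathlib

open Real

noncomputable def erf (x : ℝ) : ℝ := (2 / Real.sqrt Real.pi) * ∫ t in (0:ℝ)..x, Real.exp (-t^2)

lemma cont_exp_neg_sq : Continuous (fun t : ℝ => Real.exp (-t^2)) := by
  continuity

lemma integral_exp_pos {x : ℝ} (hx : 0 < x) :
    0 < ∫ t in (0:ℝ)..x, Real.exp (-t^2) := by
  apply intervalIntegral.intervalIntegral_pos_of_pos_on
    (cont_exp_neg_sq.intervalIntegrable 0 x)
  · intro t _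
    exact Real.exp_pos _
  · exact hx

lemma erf_pos {x : ℝ} (hx : 0 < x) : 0 < erf x := by
  unfold erf
  apply mul_pos
  · positivity
  · exact integral_exp_pos hx

lemma hasDerivAt_erf (x : ℝ) :
    HasDerivAt erf ((2 / Real.sqrt Real.pi) * Real.exp (-x^2)) x := by
  unfold erf
  exact (cont_exp_neg_sq.integral_hasStrictDerivAt 0 x).hasDerivAt.const_mul _

lemma hasDerivAt_num (x : ℝ) :
    HasDerivAt (fun t : ℝ => t * Real.exp (-t^2))
      ((1 - 2*x^2) * Real.exp (-x^2)) x := by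
  have h : HasDerivAt (fun t : ℝ => t * Real.exp (-t^2))
      (1 * Real.exp (-x^2) + x * (Real.exp (-x^2) * (-(2 * x^1)))) x := by
    exact (hasDerivAt_id x).mul (((hasDerivAt_pow 2 x).neg).exp)
  convert h using 1
  ring

lemma key {x : ℝ} (hx : 0 < x) :
    (1 - 2*x^2) * ∫ t in (0:ℝ)..x, Real.exp (-t^2) < x * Real.exp (-x^2) := by
  have hcont : Continuous (fun t : ℝ => (1 - 2*t^2) * Real.exp (-t^2)) := by
    continuity
  have h1 : x * Real.exp (-x^2) = ∫ t in (0:ℝ)..x, (1 - 2*t^2) * Real.exp (-t^2) := by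
    rw [intervalIntegral.integral_eq_sub_of_hasDerivAt
      (fun t _ => hasDerivAt_num t) (hcont.intervalIntegrable 0 x)]
    simp
  rw [h1, ← intervalIntegral.integral_const_mul]
  rw [← sub_pos, ← intervalIntegral.integral_sub (hcont.intervalIntegrable 0 x)
    ((show Continuous (fun t : ℝ => (1 - 2*x^2) * Real.exp (-t^2)) from continuous_const.mul cont_exp_neg_sq).intervalIntegrable 0 x)]
  apply intervalIntegral.intervalIntegral_pos_of_pos_on
  · exact (hcont.sub (continuous_const.mul cont_exp_neg_sq)).intervalIntegrable 0 x
  · intro t ht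
    have : (1 - 2*t^2) * Real.exp (-t^2) - (1 - 2*x^2) * Real.exp (-t^2)
        = 2 * (x^2 - t^2) * Real.exp (-t^2) := by ring
    rw [this]
    have ht2 : t^2 < x^2 := by
      have := ht.1; have := ht.2; nlinarith
    have := Real.exp_pos (-t^2)
    nlinarith
  · exact hx

lemma hasDerivAt_g {x : ℝ} (hx : 0 < x) :
    HasDerivAt (fun x : ℝ => x * Real.exp (-x^2) / erf x)
      (((1 - 2*x^2) * Real.exp (-x^2) * erf x -
        x * Real.exp (-x^2) * ((2 / Real.sqrt Real.pi) * Real.exp (-x^2))) / (erf x)^2) x :=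
  (hasDerivAt_num x).div (hasDerivAt_erf x) (ne_of_gt (erf_pos hx))

theorem g_strictAnti :
    StrictAntiOn (fun x : ℝ => x * Real.exp (-x^2) / erf x) (Set.Ioi (0:ℝ)) := by
  apply strictAntiOn_of_deriv_neg (convex_Ioi 0)
  · intro x hx
    exact ((hasDerivAt_g hx).continuousAt).continuousWithinAt
  · intro x hx
    rw [interior_Ioi] at hx
    rw [(hasDerivAt_g hx).deriv]
    apply div_neg_of_neg_of_pos
    · have hkey := key hx
      have hc : (0:ℝ) < 2 / Real.sqrt Real.pi := by positivity
      have herf : erf x = (2 / Real.sqrt Real.pi) * ∫ t in (0:ℝ)..x, Real.exp (-t^2) := rfl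
      have he := Real.exp_pos (-x^2)
      rw [herf]
      nlinarith [key hx, mul_pos hc he]
    · exact pow_pos (erf_pos hx) 2
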